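/- Upper game-theoretic probability is countably subadditive: for any sequence E₁, E₂, … of subsets of Π, UpProb(⋃ᵢ Eᵢ) ≤ Σᵢ UpProb(Eᵢ). In particular, if UpProb(Eᵢ) = 0 for all i, then UpProb(⋃ᵢ Eᵢ) = 0. -/

import Mathlib

open Filter Topology MeasureTheory
open scoped ENNReal NNReal unitInterval

noncomputable section

/-- Finite prequential sequences: finite sequences of pairs (p, y) with p ∈ [0,1], y ∈ {0,1}. -/
abbrev PreqFin := List (unitInterval × Bool)

/-- The prequential space Π = ([0,1] × {0,1})^∞. -/
abbrev PreqInf := ℕ → unitInterval × Bool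

/-- The length-n prefix π^n of π ∈ Π. -/
def prefixn (π : PreqInf) (n : ℕ) : PreqFin := List.ofFn fun i : Fin n => π i

/-- A non-negative farthingale (values in [0,∞], with the convention 0·∞ = 0):
V(x) = (1-p)·V(x,p,0) + p·V(x,p,1). -/
def IsFarthingale (V : PreqFin → ℝ≥0∞) : Prop :=
  ∀ (x : PreqFin) (p : unitInterval),
    V x = ENNReal.ofReal (1 - (p : ℝ)) * V (x ++ [(p, false)])
        + ENNReal.ofReal (p : ℝ) * V (x ++ [(p, true)])

/-- Upper game-theoretic probability of a prequential event E ⊆ Π. -/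
def UpProb (E : Set PreqInf) : ℝ≥0∞ :=
  sInf {a | ∃ V : PreqFin → ℝ≥0∞, IsFarthingale V ∧ V [] = a ∧
    ∀ π ∈ E, 1 ≤ Filter.limsup (fun n => V (prefixn π n)) Filter.atTop}

/-- Countable subadditivity of upper game-theoretic probability; in particular, a countable
union of events of upper probability zero has upper probability zero. -/
theorem upProb_countably_subadditive (E : ℕ → Set PreqInf) :
    UpProb (⋃ i, E i) ≤ ∑' i, UpProb (E i) ∧
      ((∀ i, UpProb (E i) = 0) → UpProb (⋃ i, E i) = 0) := by
  have main : UpProb (⋃ i, E i) ≤ ∑' i, UpProb (E i) := by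
    by_cases htop : ∑' i, UpProb (E i) = ∞
    · simp [htop]
    refine ENNReal.le_of_forall_pos_le_add fun ε hε _ => ?_
    obtain ⟨δ, hδpos, hδsum⟩ :=
      ENNReal.exists_pos_sum_of_countable' (ε := ε) (by exact_mod_cast hε.ne') ℕ
    have key : ∀ i, ∃ V : PreqFin → ℝ≥0∞, IsFarthingale V ∧
        V [] ≤ UpProb (E i) + δ i ∧
        ∀ π ∈ E i, 1 ≤ Filter.limsup (fun n => V (prefixn π n)) Filter.atTop := by
      intro i
      have hfin : UpProb (E i) ≠ ∞ := ne_top_of_le_ne_top htop (ENNReal.le_tsum i)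
      have hlt : UpProb (E i) < UpProb (E i) + δ i :=
        ENNReal.lt_add_right hfin (hδpos i).ne'
      unfold UpProb at hlt
      obtain ⟨a, ha, halt⟩ := sInf_lt_iff.mp hlt
      obtain ⟨V, hfar, hval, hlim⟩ := ha
      exact ⟨V, hfar, by rw [hval]; exact halt.le, hlim⟩
    choose V hfar hVle hVlim using key
    set W : PreqFin → ℝ≥0∞ := fun x => ∑' i, V i x with hW
    have hWfar : IsFarthingale W := by
      intro x p
      calc W x = ∑' i, (ENNReal.ofReal (1 - (p : ℝ)) * V i (x ++ [(p, false)])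
            + ENNReal.ofReal (p : ℝ) * V i (x ++ [(p, true)])) :=
            tsum_congr fun i => hfar i x p
        _ = ∑' i, ENNReal.ofReal (1 - (p : ℝ)) * V i (x ++ [(p, false)])
            + ∑' i, ENNReal.ofReal (p : ℝ) * V i (x ++ [(p, true)]) := ENNReal.tsum_add
        _ = ENNReal.ofReal (1 - (p : ℝ)) * W (x ++ [(p, false)])
            + ENNReal.ofReal (p : ℝ) * W (x ++ [(p, true)]) := by
            rw [ENNReal.tsum_mul_left, ENNReal.tsum_mul_left]
    have hWlim : ∀ π ∈ ⋃ i, E i,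
        1 ≤ Filter.limsup (fun n => W (prefixn π n)) Filter.atTop := by
      intro π hπ
      obtain ⟨j, hj⟩ := Set.mem_iUnion.mp hπ
      refine le_trans (hVlim j π hj) (Filter.limsup_le_limsup ?_)
      exact Filter.Eventually.of_forall fun n => ENNReal.le_tsum j
    have hmem : UpProb (⋃ i, E i) ≤ W [] := sInf_le ⟨W, hWfar, rfl, hWlim⟩
    calc UpProb (⋃ i, E i) ≤ W [] := hmem
      _ ≤ ∑' i, (UpProb (E i) + δ i) := ENNReal.tsum_le_tsum fun i => hVle i
      _ = ∑' i, UpProb (E i) + ∑' i, δ i := ENNReal.tsum_add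
      _ ≤ ∑' i, UpProb (E i) + ε := add_le_add_right hδsum.le _
  exact ⟨main, fun h => le_antisymm (by simpa [h] using main) zero_le⟩
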